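/- For integers s, t ≥ 1, the 2-parameter generalized Stern polynomials satisfy the generating function identity Σ_{n≥1} ω_{s,t}(n;y,z) q^n = q · Π_{j≥0} (1 + y^{s^j} q^{2^j} + z^{t^j} q^{2^{j+1}}) as formal power series in q over the polynomial ring ℤ[y,z]. -/

import Mathlib

open MvPolynomial

/-- Substitution `y ↦ y^s`, `z ↦ z^t` in `ℤ[y, z]`, where `y = X 0` and `z = X 1`. -/
noncomputable def subst (s t : ℕ) (p : MvPolynomial (Fin 2) ℤ) : MvPolynomial (Fin 2) ℤ :=
  aeval (fun i : Fin 2 => (X i : MvPolynomial (Fin 2) ℤ) ^ (if i = 0 then s else t)) p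

namespace OmegaGFAux

local notation "R" => MvPolynomial (Fin 2) ℤ

noncomputable def f (s t j : ℕ) : PowerSeries R :=
  1 + PowerSeries.C ((X 0 : R) ^ s ^ j) * PowerSeries.X ^ 2 ^ j +
    PowerSeries.C ((X 1 : R) ^ t ^ j) * PowerSeries.X ^ 2 ^ (j + 1)

lemma subst_add (s t : ℕ) (p q : R) : subst s t (p + q) = subst s t p + subst s t q :=
  map_add (aeval _) _ _

lemma subst_mul (s t : ℕ) (p q : R) : subst s t (p * q) = subst s t p * subst s t q :=
  map_mul (aeval _) _ _

lemma subst_one (s t : ℕ) : subst s t (1 : R) = 1 := map_one (aeval _)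

lemma subst_zero (s t : ℕ) : subst s t (0 : R) = 0 := map_zero (aeval _)

lemma subst_X0_pow (s t k : ℕ) : subst s t ((X 0 : R) ^ k) = (X 0 : R) ^ (s * k) := by
  simp [subst, mul_comm, pow_mul]

lemma subst_X1_pow (s t k : ℕ) : subst s t ((X 1 : R) ^ k) = (X 1 : R) ^ (t * k) := by
  simp [subst, mul_comm, pow_mul]

lemma coeff_mul_f (s t j n : ℕ) (F : PowerSeries R) :
    PowerSeries.coeff n (F * f s t j) =
      PowerSeries.coeff n F +
        (if 2 ^ j ≤ n then (X 0 : R) ^ s ^ j * PowerSeries.coeff (n - 2 ^ j) F else 0) +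
        (if 2 ^ (j + 1) ≤ n then (X 1 : R) ^ t ^ j * PowerSeries.coeff (n - 2 ^ (j + 1)) F
          else 0) := by
  have h1 : F * (PowerSeries.C ((X 0 : R) ^ s ^ j) * PowerSeries.X ^ 2 ^ j) =
      PowerSeries.C ((X 0 : R) ^ s ^ j) * (F * PowerSeries.X ^ 2 ^ j) := by ring
  have h2 : F * (PowerSeries.C ((X 1 : R) ^ t ^ j) * PowerSeries.X ^ 2 ^ (j + 1)) =
      PowerSeries.C ((X 1 : R) ^ t ^ j) * (F * PowerSeries.X ^ 2 ^ (j + 1)) := by ring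
  rw [f, mul_add, mul_add, mul_one, map_add, map_add, h1, h2,
    PowerSeries.coeff_C_mul, PowerSeries.coeff_C_mul,
    PowerSeries.coeff_mul_X_pow', PowerSeries.coeff_mul_X_pow']
  split_ifs <;> ring

lemma coeff_X_mul' (n : ℕ) (F : PowerSeries R) :
    PowerSeries.coeff n (PowerSeries.X * F) =
      if 1 ≤ n then PowerSeries.coeff (n - 1) F else 0 := by
  have := PowerSeries.coeff_mul_X_pow' F 1 n
  simpa [mul_comm] using this

lemma coeff_shift_odd (s t N : ℕ) :
    ∀ n, ¬ (2 ∣ n) → PowerSeries.coeff n (∏ j ∈ Finset.range N, f s t (j + 1)) = 0 := by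
  induction N with
  | zero =>
    intro n hn
    have hn0 : n ≠ 0 := by omega
    simp [PowerSeries.coeff_one, hn0]
  | succ N ih =>
    intro n hn
    have e1 : (2 : ℕ) ∣ 2 ^ (N + 1) := dvd_pow_self 2 N.succ_ne_zero
    have e2 : (2 : ℕ) ∣ 2 ^ (N + 1 + 1) := dvd_pow_self 2 (N + 1).succ_ne_zero
    rw [Finset.prod_range_succ, coeff_mul_f, ih n hn]
    split_ifs with h1 h2
    · rw [ih _ (by omega), ih _ (by omega)]; ring
    · rw [ih _ (by omega)]; ring
    · rw [ih _ (by omega)]; ring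
    · ring

lemma coeff_shift_even (s t N : ℕ) :
    ∀ m, PowerSeries.coeff (2 * m) (∏ j ∈ Finset.range N, f s t (j + 1)) =
      subst s t (PowerSeries.coeff m (∏ j ∈ Finset.range N, f s t j)) := by
  induction N with
  | zero =>
    intro m
    match m with
    | 0 => simp [subst_one]
    | Nat.succ k =>
      simp [PowerSeries.coeff_one, subst_zero, Nat.succ_ne_zero,
        (by omega : 2 * (k + 1) ≠ 0)]
  | succ N ih =>
    intro m
    have hp : (2 : ℕ) ^ (N + 1) = 2 * 2 ^ N := by rw [pow_succ]; ring
    have hp2 : (2 : ℕ) ^ (N + 1 + 1) = 2 * 2 ^ (N + 1) := by rw [pow_succ 2 (N + 1)]; ring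
    rw [Finset.prod_range_succ, Finset.prod_range_succ, coeff_mul_f, coeff_mul_f,
      subst_add, subst_add, ih m]
    congr 1
    · congr 1
      by_cases h : 2 ^ N ≤ m
      · rw [if_pos h, if_pos (by omega : 2 ^ (N + 1) ≤ 2 * m),
          (by omega : 2 * m - 2 ^ (N + 1) = 2 * (m - 2 ^ N)), ih, subst_mul, subst_X0_pow,
          ← pow_succ']
      · rw [if_neg h, if_neg (by omega), subst_zero]
    · by_cases h : 2 ^ (N + 1) ≤ m
      · rw [if_pos h, if_pos (by omega : 2 ^ (N + 1 + 1) ≤ 2 * m),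
          (by omega : 2 * m - 2 ^ (N + 1 + 1) = 2 * (m - 2 ^ (N + 1))), ih, subst_mul,
          subst_X1_pow, ← pow_succ']
      · rw [if_neg h, if_neg (by omega), subst_zero]

lemma key (s t : ℕ) (w : ℕ → R) (hw0 : w 0 = 0) (hw1 : w 1 = 1)
    (hweven : ∀ n, 1 ≤ n → w (2 * n) = X 0 * subst s t (w n))
    (hwodd : ∀ n, 1 ≤ n → w (2 * n + 1) = X 1 * subst s t (w n) + subst s t (w (n + 1))) :
    ∀ N n, n ≤ 2 ^ N →
      PowerSeries.coeff n (PowerSeries.X * ∏ j ∈ Finset.range N, f s t j) = w n := by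
  intro N
  induction N with
  | zero =>
    intro n hn
    rw [pow_zero] at hn
    interval_cases n
    · rw [coeff_X_mul', if_neg (by omega), hw0]
    · rw [coeff_X_mul', if_pos le_rfl]
      simpa using hw1.symm
  | succ N ih =>
    intro n hn
    have hone : (1 : ℕ) ≤ 2 ^ N := Nat.one_le_two_pow
    have hp : (2 : ℕ) ^ (N + 1) = 2 * 2 ^ N := by rw [pow_succ]; ring
    have hodd : ∀ k, ¬ (2 ∣ k) →
        PowerSeries.coeff k (∏ j ∈ Finset.range N, f s t (j + 1)) = 0 :=
      coeff_shift_odd s t N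
    have heven : ∀ m, PowerSeries.coeff (2 * m) (∏ j ∈ Finset.range N, f s t (j + 1)) =
        subst s t (PowerSeries.coeff m (∏ j ∈ Finset.range N, f s t j)) :=
      coeff_shift_even s t N
    have hP : ∀ m, m + 1 ≤ 2 ^ N →
        PowerSeries.coeff m (∏ j ∈ Finset.range N, f s t j) = w (m + 1) := by
      intro m hm
      have h := ih (m + 1) hm
      rwa [coeff_X_mul', if_pos (by omega), Nat.add_sub_cancel] at h
    rw [Finset.prod_range_succ',
      show PowerSeries.X * ((∏ j ∈ Finset.range N, f s t (j + 1)) * f s t 0)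
        = (PowerSeries.X * ∏ j ∈ Finset.range N, f s t (j + 1)) * f s t 0 by ring,
      coeff_mul_f]
    simp only [pow_zero, pow_one, zero_add, coeff_X_mul']
    rcases Nat.even_or_odd' n with ⟨m, rfl | rfl⟩
    · -- n = 2 * m
      rcases Nat.eq_zero_or_pos m with rfl | hm
      · rw [if_neg (by omega), if_neg (by omega), if_neg (by omega)]
        simpa using hw0.symm
      · obtain ⟨k, rfl⟩ : ∃ k, m = k + 1 := ⟨m - 1, by omega⟩
        rw [if_pos (by omega), if_pos (by omega), if_pos (by omega), if_pos (by omega),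
          (by omega : 2 * (k + 1) - 1 = 2 * k + 1), hodd (2 * k + 1) (by omega),
          (by omega : 2 * k + 1 - 1 = 2 * k), heven k, hP k (by rw [hp] at hn; omega),
          hweven (k + 1) (by omega)]
        have hz : (if 1 ≤ 2 * (k + 1) - 2 then
            PowerSeries.coeff (2 * (k + 1) - 2 - 1)
              (∏ j ∈ Finset.range N, f s t (j + 1)) else 0) = 0 := by
          rcases Nat.eq_zero_or_pos k with rfl | hk
          · rw [if_neg (by omega)]
          · obtain ⟨l, rfl⟩ : ∃ l, k = l + 1 := ⟨k - 1, by omega⟩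
            rw [if_pos (by omega), (by omega : 2 * (l + 1 + 1) - 2 - 1 = 2 * l + 1),
              hodd (2 * l + 1) (by omega)]
        rw [hz]
        ring
    · -- n = 2 * m + 1
      rw [if_pos (by omega), Nat.add_sub_cancel, heven m, hP m (by rw [hp] at hn; omega)]
      have hz1 : (if 1 ≤ 2 * m then
          PowerSeries.coeff (2 * m - 1) (∏ j ∈ Finset.range N, f s t (j + 1)) else 0) = 0 := by
        rcases Nat.eq_zero_or_pos m with rfl | hm
        · rw [if_neg (by omega)]
        · obtain ⟨l, rfl⟩ : ∃ l, m = l + 1 := ⟨m - 1, by omega⟩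
          rw [if_pos (by omega), (by omega : 2 * (l + 1) - 1 = 2 * l + 1),
            hodd (2 * l + 1) (by omega)]
      rw [hz1]
      rcases Nat.eq_zero_or_pos m with rfl | hm
      · rw [if_neg (show ¬ (2 ≤ 2 * 0 + 1) by omega)]
        norm_num [subst_one, hw1]
      · obtain ⟨l, rfl⟩ : ∃ l, m = l + 1 := ⟨m - 1, by omega⟩
        rw [if_pos (by omega), (by omega : 2 * (l + 1) + 1 - 2 = 2 * l + 1), if_pos (by omega),
          (by omega : 2 * l + 1 - 1 = 2 * l), heven l, hP l (by rw [hp] at hn; omega),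
          hwodd (l + 1) (by omega)]
        split_ifs with h
        · ring
        · omega

end OmegaGFAux

/-- Generating function of the 2-parameter generalized Stern polynomials:
`∑_{n≥1} ω_{s,t}(n; y, z) q^n = q ∏_{j≥0} (1 + y^{s^j} q^{2^j} + z^{t^j} q^{2^{j+1}})`
as formal power series over `ℤ[y, z]`.  The infinite product is rendered
coefficientwise: the coefficient of `q^n` in `q ∏_{j<N}` has stabilized once `n < 2^N`. -/
theorem omega_generating_function (s t : ℕ) (hs : 1 ≤ s) (ht : 1 ≤ t)
    (w : ℕ → MvPolynomial (Fin 2) ℤ)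
    (hw0 : w 0 = 0) (hw1 : w 1 = 1)
    (hweven : ∀ n, 1 ≤ n → w (2 * n) = X 0 * subst s t (w n))
    (hwodd : ∀ n, 1 ≤ n → w (2 * n + 1) = X 1 * subst s t (w n) + subst s t (w (n + 1))) :
    ∀ n N : ℕ, n < 2 ^ N →
      PowerSeries.coeff (R := MvPolynomial (Fin 2) ℤ) n
        (PowerSeries.X *
          ∏ j ∈ Finset.range N,
            (1 + PowerSeries.C (R := MvPolynomial (Fin 2) ℤ) ((X 0 : MvPolynomial (Fin 2) ℤ) ^ s ^ j) *
                  PowerSeries.X ^ 2 ^ j +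
                PowerSeries.C (R := MvPolynomial (Fin 2) ℤ) ((X 1 : MvPolynomial (Fin 2) ℤ) ^ t ^ j) *
                  PowerSeries.X ^ 2 ^ (j + 1))) = w n := by
  intro n N hn
  have h := OmegaGFAux.key s t w hw0 hw1 hweven hwodd N n (le_of_lt hn)
  simpa [OmegaGFAux.f] using h
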